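/- Under the hypotheses of Theorem 1, the limit potential satisfies lim_{x→+∞} V_∞(t,x) = 0 for each fixed t ∈ ℝ. -/

import Mathlib

noncomputable section

def solitonEntry (κ c : ℕ → ℝ) (t x : ℝ) (j l : ℕ) : ℝ :=
  c j * c l / (κ j + κ l) * Real.exp (4 * ((κ j) ^ 3 + (κ l) ^ 3) * t - (κ j + κ l) * x)

def tauN (κ c : ℕ → ℝ) (N : ℕ) (t x : ℝ) : ℝ :=
  Matrix.det ((1 : Matrix (Fin N) (Fin N) ℝ) +
    Matrix.of fun j l : Fin N => solitonEntry κ c t x j l)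

def tauInf (κ c : ℕ → ℝ) (t x : ℝ) : ℝ :=
  Filter.limUnder Filter.atTop (fun N => tauN κ c N t x)

/-- `V_∞(t,x) = -2 ∂²ₓ ln det₁(1 + C_∞(t,x))`. -/
def Vinf (κ c : ℕ → ℝ) (t x : ℝ) : ℝ :=
  -2 * iteratedDeriv 2 (fun y => Real.log (tauInf κ c t y)) x

namespace Stmt13

open MeasureTheory Filter Real Matrix Finset

/-! ### General auxiliary lemmas -/

lemma exp_int {b : ℝ} (hb : 0 < b) : ∫ s in Set.Ioi (0:ℝ), Real.exp (-b * s) = 1 / b := by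
  have h := integral_Ioi_of_hasDerivAt_of_tendsto (f := fun s => -Real.exp (-b * s) / b)
    (f' := fun s => Real.exp (-b * s)) (a := 0) (m := 0) ?_ ?_ ?_ ?_
  · rw [h]; simp [neg_div]
  · exact ((Real.continuous_exp.comp (continuous_const.mul continuous_id)).neg.div_const
      b).continuousWithinAt
  · intro x _
    have : HasDerivAt (fun s => -Real.exp (-b * s) / b) (-(Real.exp (-b * id x) * (-b * 1)) / b) x :=
      (((hasDerivAt_id x).const_mul (-b)).exp.neg).div_const b
    refine this.congr_deriv ?_
    field_simp
    rfl
  · exact exp_neg_integrableOn_Ioi 0 hb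
  · have : Tendsto (fun s : ℝ => Real.exp (-b * s)) atTop (nhds 0) :=
      Real.tendsto_exp_atBot.comp (tendsto_id.const_mul_atTop_of_neg (neg_lt_zero.mpr hb))
    simpa using (this.neg.div_const b)

lemma gram_psd {ι : Type*} [Fintype ι] (k u : ι → ℝ) (hk : ∀ i, 0 < k i) :
    Matrix.PosSemidef (Matrix.of fun i j => u i * u j / (k i + k j)) := by
  refine Matrix.PosSemidef.of_dotProduct_mulVec_nonneg ?_ ?_
  · ext i j
    simp only [Matrix.conjTranspose_apply, Matrix.of_apply, star_trivial]
    rw [add_comm (k j) (k i), mul_comm (u j) (u i)]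
  · intro v
    set q : ι → ℝ := fun i => v i * u i with hq
    have hkij : ∀ i j : ι, 0 < k i + k j := fun i j => add_pos (hk i) (hk j)
    have hrw : ∀ (i j : ι) (s : ℝ), (q i * Real.exp (-(k i) * s)) * (q j * Real.exp (-(k j) * s))
        = (q i * q j) * Real.exp (-(k i + k j) * s) := by
      intro i j s
      rw [show -(k i + k j)*s = -k i * s + (-k j * s) by ring, Real.exp_add]; ring
    have hint : ∀ i j : ι, MeasureTheory.IntegrableOn
        (fun s => (q i * Real.exp (-(k i) * s)) * (q j * Real.exp (-(k j) * s)))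
        (Set.Ioi 0) := by
      intro i j
      simp_rw [hrw i j]
      exact (exp_neg_integrableOn_Ioi 0 (hkij i j)).const_mul _
    have key : ∀ i j : ι, ∫ s in Set.Ioi (0:ℝ),
        (q i * Real.exp (-(k i) * s)) * (q j * Real.exp (-(k j) * s))
          = q i * q j / (k i + k j) := by
      intro i j
      simp_rw [hrw i j]
      rw [MeasureTheory.integral_const_mul, exp_int (hkij i j)]
      ring
    have h1 : (0:ℝ) ≤ ∫ s in Set.Ioi (0:ℝ), (∑ i, q i * Real.exp (-(k i) * s))^2 :=
      MeasureTheory.integral_nonneg (fun s => sq_nonneg _)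
    have h2 : ∫ s in Set.Ioi (0:ℝ), (∑ i, q i * Real.exp (-(k i) * s))^2
        = ∑ i, ∑ j, q i * q j / (k i + k j) := by
      have hpt : ∀ s:ℝ, (∑ i, q i * Real.exp (-(k i) * s))^2
          = ∑ i, ∑ j, (q i * Real.exp (-(k i) * s)) * (q j * Real.exp (-(k j) * s)) := by
        intro s; rw [sq, Finset.sum_mul_sum]
      simp_rw [hpt]
      rw [MeasureTheory.integral_finset_sum _
        (fun i _ => (MeasureTheory.integrable_finset_sum _ (fun j _ => hint i j)))]
      refine Finset.sum_congr rfl fun i _ => ?_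
      rw [MeasureTheory.integral_finset_sum _ (fun j _ => hint i j)]
      exact Finset.sum_congr rfl fun j _ => key i j
    have h3 : dotProduct (star v)
        (Matrix.mulVec (Matrix.of fun i j => u i * u j / (k i + k j)) v)
        = ∑ i, ∑ j, q i * q j / (k i + k j) := by
      simp only [dotProduct, Matrix.mulVec, star_trivial, Pi.star_apply,
        Matrix.of_apply, Finset.mul_sum]
      refine Finset.sum_congr rfl fun i _ => Finset.sum_congr rfl fun j _ => by
        simp only [hq]; ring
    show 0 ≤ dotProduct (star v) _
    rw [h3, ← h2]; exact h1

lemma psd_det_nonneg {n : Type*} [Fintype n] [DecidableEq n] {A : Matrix n n ℝ}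
    (hA : A.PosSemidef) : 0 ≤ A.det := by
  exact hA.det_nonneg

lemma trace_eq_sum_eig {n : Type*} [Fintype n] [DecidableEq n] {A : Matrix n n ℝ}
    (hA : A.IsHermitian) : A.trace = ∑ i, hA.eigenvalues i := by
  have hU := (Matrix.mem_unitaryGroup_iff').mp (hA.eigenvectorUnitary).2
  calc A.trace
      = ((hA.eigenvectorUnitary : Matrix n n ℝ) * Matrix.diagonal (RCLike.ofReal ∘ hA.eigenvalues)
          * (star (hA.eigenvectorUnitary : Matrix n n ℝ))).trace := by
        conv_lhs => rw [hA.spectral_theorem]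
        rfl
    _ = ((star (hA.eigenvectorUnitary : Matrix n n ℝ)) *
          (hA.eigenvectorUnitary : Matrix n n ℝ) *
          Matrix.diagonal (RCLike.ofReal ∘ hA.eigenvalues)).trace := by
        rw [Matrix.trace_mul_cycle]
    _ = ∑ i, hA.eigenvalues i := by
        rw [hU, one_mul, Matrix.trace_diagonal]
        simp

lemma psd_hadamard {n : Type*} [Fintype n] [DecidableEq n] {A : Matrix n n ℝ}
    (hA : A.PosSemidef) (hd : ∀ i, 0 < A i i) : A.det ≤ ∏ i, A i i := by
  rcases isEmpty_or_nonempty n with h | h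
  · simp [Matrix.det_isEmpty]
  set m := Fintype.card n with hm
  have hm0 : 0 < m := Fintype.card_pos
  set e : n → ℝ := fun i => Real.sqrt (A i i) with he
  have hepos : ∀ i, 0 < e i := fun i => Real.sqrt_pos.mpr (hd i)
  set B := Matrix.diagonal (fun i => (e i)⁻¹) with hB
  have hBh : Bᴴ = B := by
    rw [hB, Matrix.diagonal_conjTranspose]
    congr 1
  have hC : (Bᴴ * A * B).PosSemidef := hA.conjTranspose_mul_mul_same B
  set C := Bᴴ * A * B with hCdef
  have hCdiag : ∀ i, C i i = 1 := by
    intro i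
    rw [hCdef, hBh, hB, Matrix.mul_diagonal, Matrix.diagonal_mul]
    rw [show A i i = e i * e i from (Real.mul_self_sqrt (hd i).le).symm]
    field_simp [(hepos i).ne']
  set lam := hC.isHermitian.eigenvalues with hlam
  have hl0 : ∀ i, 0 ≤ lam i := hC.eigenvalues_nonneg
  have htr : ∑ i, lam i = (m : ℝ) := by
    rw [← trace_eq_sum_eig hC.isHermitian, Matrix.trace]
    simp [Matrix.diag, hCdiag, hm]
  have hdet : C.det = ∏ i, lam i := by
    have := hC.isHermitian.det_eq_prod_eigenvalues
    simpa using this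
  have hprod1 : ∏ i, lam i ≤ 1 := by
    have hw : ∑ _i : n, (1/(m:ℝ)) = 1 := by
      rw [Finset.sum_const, Finset.card_univ, ← hm, nsmul_eq_mul]
      field_simp
    have hgm := Real.geom_mean_le_arith_mean_weighted Finset.univ (fun _ => 1/(m:ℝ)) lam
      (fun i _ => by positivity) hw (fun i _ => hl0 i)
    have hsum1 : ∑ i, (1/(m:ℝ)) * lam i = 1 := by
      rw [← Finset.mul_sum, htr]
      field_simp
    rw [hsum1] at hgm
    have hmne : (m:ℝ) ≠ 0 := Nat.cast_ne_zero.mpr hm0.ne'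
    calc ∏ i, lam i = ∏ i, (lam i ^ (1/(m:ℝ))) ^ (m:ℕ) := by
          refine Finset.prod_congr rfl fun i _ => ?_
          rw [← Real.rpow_natCast (lam i ^ (1/(m:ℝ))) m, ← Real.rpow_mul (hl0 i)]
          rw [one_div_mul_cancel hmne, Real.rpow_one]
      _ = (∏ i, lam i ^ (1/(m:ℝ))) ^ (m:ℕ) := by rw [Finset.prod_pow]
      _ ≤ 1 ^ (m:ℕ) := pow_le_pow_left₀ (Finset.prod_nonneg fun i _ =>
            Real.rpow_nonneg (hl0 i) _) hgm m
      _ = 1 := one_pow m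
  have hdetC : C.det ≤ 1 := by rw [hdet]; exact hprod1
  set P := ∏ i, e i with hP
  have hPpos : 0 < P := Finset.prod_pos fun i _ => hepos i
  have hdetB : B.det = P⁻¹ := by
    rw [hB, Matrix.det_diagonal, hP, ← Finset.prod_inv_distrib]
  have hCdet2 : C.det = P⁻¹ * A.det * P⁻¹ := by
    rw [hCdef, Matrix.det_mul, Matrix.det_mul, hBh, hdetB]
  have hAC : A.det = P^2 * C.det := by
    rw [hCdet2]; field_simp
  rw [hAC]
  calc P^2 * C.det ≤ P^2 * 1 := mul_le_mul_of_nonneg_left hdetC (by positivity)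
    _ = ∏ i, A i i := by
        rw [mul_one, hP, sq, ← Finset.prod_mul_distrib]
        exact Finset.prod_congr rfl fun i _ => Real.mul_self_sqrt (hd i).le

lemma det_piecewise {N : ℕ} (s : Finset (Fin N)) (M : Matrix (Fin N) (Fin N) ℝ) :
    Matrix.det (Matrix.of (s.piecewise M (1 : Matrix (Fin N) (Fin N) ℝ)))
      = Matrix.det (M.submatrix (Subtype.val : {i // i ∈ s} → Fin N) Subtype.val) := by
  classical
  set B := Matrix.of (s.piecewise M (1 : Matrix (Fin N) (Fin N) ℝ)) with hBdef
  set e : {i // i ∈ s} ⊕ {i // i ∉ s} ≃ Fin N := Equiv.sumCompl (· ∈ s) with he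
  have hsub : B.submatrix e e = Matrix.fromBlocks
      (M.submatrix (Subtype.val : {i // i ∈ s} → Fin N) Subtype.val)
      (M.submatrix (Subtype.val : {i // i ∈ s} → Fin N) Subtype.val)
      0 (1 : Matrix {i // i ∉ s} {i // i ∉ s} ℝ) := by
    ext i j
    cases i with
    | inl i =>
      cases j with
      | inl j => simp [hBdef, he, Finset.piecewise, i.2]
      | inr j => simp [hBdef, he, Finset.piecewise, i.2]
    | inr i =>
      cases j with
      | inl j =>
        have hne : (i : Fin N) ≠ (j : Fin N) := fun hh => i.2 (hh ▸ j.2)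
        simp [hBdef, he, Finset.piecewise, i.2, Matrix.one_apply, hne]
      | inr j =>
        by_cases hij : i = j
        · subst hij
          simp [hBdef, he, Finset.piecewise, i.2, Matrix.one_apply]
        · have hne : (i : Fin N) ≠ (j : Fin N) := fun hh => hij (Subtype.ext hh)
          simp [hBdef, he, Finset.piecewise, i.2,
            Matrix.one_apply, hne, hij]
  calc B.det = (B.submatrix e e).det := (Matrix.det_submatrix_equiv_self e B).symm
    _ = _ := by rw [hsub, Matrix.det_fromBlocks_zero₂₁, Matrix.det_one, mul_one]

lemma det_one_add_eq_sum_minors {N : ℕ} (M : Matrix (Fin N) (Fin N) ℝ) :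
    Matrix.det (1 + M) = ∑ s : Finset (Fin N),
      Matrix.det (M.submatrix (Subtype.val : {i // i ∈ s} → Fin N) Subtype.val) := by
  classical
  have h1 : (1 + M : Matrix (Fin N) (Fin N) ℝ) = M + 1 := add_comm _ _
  have h2 : Matrix.det (M + 1) =
      ∑ s : Finset (Fin N),
        Matrix.det (Matrix.of (s.piecewise M (1 : Matrix (Fin N) (Fin N) ℝ))) := by
    have := (Matrix.detRowAlternating :
      AlternatingMap ℝ (Fin N → ℝ) ℝ (Fin N)).toMultilinearMap.map_add_univ
        (M : Fin N → Fin N → ℝ) ((1 : Matrix (Fin N) (Fin N) ℝ) : Fin N → Fin N → ℝ)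
    exact this
  rw [h1, h2]
  exact Finset.sum_congr rfl fun s _ => det_piecewise s M


/-! ### Soliton-specific setup -/

variable (κ c : ℕ → ℝ) (t : ℝ)

def w (x : ℝ) (j : ℕ) : ℝ := c j * Real.exp (4 * κ j ^ 3 * t - κ j * x)

def ment (x : ℝ) (j l : ℕ) : ℝ := w κ c t x j * w κ c t x l / (κ j + κ l)

def minor (x : ℝ) (S : Finset ℕ) : ℝ :=
  Matrix.det (Matrix.of fun i j : {n // n ∈ S} => ment κ c t x i.1 j.1)

def aS (S : Finset ℕ) : ℝ := minor κ c t 0 S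

def bS (S : Finset ℕ) : ℝ := 2 * ∑ j ∈ S, κ j

def dg (x : ℝ) (j : ℕ) : ℝ := w κ c t x j ^ 2 / (2 * κ j)

lemma entry_eq (x : ℝ) (j l : ℕ) : solitonEntry κ c t x j l = ment κ c t x j l := by
  unfold solitonEntry ment w
  rw [show 4*((κ j)^3+(κ l)^3)*t - (κ j + κ l)*x
      = (4*κ j^3*t - κ j*x) + (4*κ l^3*t - κ l*x) by ring, Real.exp_add]
  ring

lemma w_scale (x : ℝ) (j : ℕ) : w κ c t x j = w κ c t 0 j * Real.exp (-κ j * x) := by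
  unfold w
  rw [show 4 * κ j ^ 3 * t - κ j * x = (4 * κ j ^ 3 * t - κ j * 0) + (-κ j * x) by ring,
    Real.exp_add, ← mul_assoc]

lemma ment_scale (x : ℝ) (j l : ℕ) :
    ment κ c t x j l = Real.exp (-κ j * x) * (Real.exp (-κ l * x) * ment κ c t 0 j l) := by
  unfold ment
  rw [w_scale κ c t x j, w_scale κ c t x l]
  ring

lemma minor_scale (x : ℝ) (S : Finset ℕ) :
    minor κ c t x S = aS κ c t S * Real.exp (-bS κ S * x) := by
  unfold aS bS minor
  have hmat : (Matrix.of fun i j : {n // n ∈ S} => ment κ c t x i.1 j.1)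
      = Matrix.of fun i j : {n // n ∈ S} =>
          (fun i : {n // n ∈ S} => Real.exp (-κ i.1 * x)) i *
          (Matrix.of fun i j : {n // n ∈ S} =>
            (fun j : {n // n ∈ S} => Real.exp (-κ j.1 * x)) j *
            (Matrix.of fun i j : {n // n ∈ S} => ment κ c t 0 i.1 j.1) i j) i j := by
    ext i j
    simp only [Matrix.of_apply]
    rw [ment_scale]
  rw [hmat, Matrix.det_mul_column, Matrix.det_mul_row]
  have hprod : (∏ i : {n // n ∈ S}, Real.exp (-κ i.1 * x))
      = Real.exp (-(∑ j ∈ S, κ j) * x) := by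
    rw [← Real.exp_sum]
    congr 1
    rw [Finset.sum_coe_sort S (fun j => -κ j * x), ← Finset.sum_mul, ← Finset.sum_neg_distrib]
  rw [hprod, ← mul_assoc, ← Real.exp_add,
    show -(∑ j ∈ S, κ j) * x + -(∑ j ∈ S, κ j) * x = -(2 * ∑ j ∈ S, κ j) * x by ring,
    mul_comm]

lemma ment_psd (hκ : ∀ j, 0 < κ j) (x : ℝ) (S : Finset ℕ) :
    Matrix.PosSemidef (Matrix.of fun i j : {n // n ∈ S} => ment κ c t x i.1 j.1) :=
  gram_psd (fun i : {n // n ∈ S} => κ i.1) (fun i => w κ c t x i.1) (fun i => hκ i.1)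

lemma minor_nonneg (hκ : ∀ j, 0 < κ j) (x : ℝ) (S : Finset ℕ) :
    0 ≤ minor κ c t x S :=
  psd_det_nonneg (ment_psd κ c t hκ x S)

lemma aS_nonneg (hκ : ∀ j, 0 < κ j) (S : Finset ℕ) : 0 ≤ aS κ c t S :=
  minor_nonneg κ c t hκ 0 S

lemma w_pos (hc : ∀ j, 0 < c j) (x : ℝ) (j : ℕ) : 0 < w κ c t x j :=
  mul_pos (hc j) (Real.exp_pos _)

lemma dg_pos (hκ : ∀ j, 0 < κ j) (hc : ∀ j, 0 < c j) (x : ℝ) (j : ℕ) :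
    0 < dg κ c t x j :=
  div_pos (pow_pos (w_pos κ c t hc x j) 2) (by linarith [hκ j])

lemma ment_diag (x : ℝ) (j : ℕ) : ment κ c t x j j = dg κ c t x j := by
  unfold ment dg
  rw [← sq, two_mul]

lemma minor_le_prod (hκ : ∀ j, 0 < κ j) (hc : ∀ j, 0 < c j) (x : ℝ) (S : Finset ℕ) :
    minor κ c t x S ≤ ∏ j ∈ S, dg κ c t x j := by
  have h := psd_hadamard (ment_psd κ c t hκ x S) (fun i => by
    rw [Matrix.of_apply, ment_diag]
    exact dg_pos κ c t hκ hc x i.1)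
  calc minor κ c t x S ≤ ∏ i : {n // n ∈ S},
        (Matrix.of fun i j : {n // n ∈ S} => ment κ c t x i.1 j.1) i i := h
    _ = ∏ i : {n // n ∈ S}, dg κ c t x i.1 := by
        exact Finset.prod_congr rfl fun i _ => by rw [Matrix.of_apply, ment_diag]
    _ = ∏ j ∈ S, dg κ c t x j := Finset.prod_coe_sort S (fun j => dg κ c t x j)

lemma bS_nonneg (hκ : ∀ j, 0 < κ j) (S : Finset ℕ) : 0 ≤ bS κ S := by
  unfold bS
  have : (0:ℝ) ≤ ∑ j ∈ S, κ j := Finset.sum_nonneg fun j _ => (hκ j).le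
  linarith

lemma bS_pos (hκ : ∀ j, 0 < κ j) {S : Finset ℕ} (hS : S.Nonempty) : 0 < bS κ S := by
  unfold bS
  have : (0:ℝ) < ∑ j ∈ S, κ j := Finset.sum_pos (fun j _ => hκ j) hS
  linarith

lemma aS_empty : aS κ c t ∅ = 1 := by
  unfold aS minor
  rw [Matrix.det_isEmpty]

lemma bS_empty : bS κ ∅ = 0 := by simp [bS]


/-! ### Summability -/

lemma dg_le (hκ : ∀ j, 0 < κ j) {Mb : ℝ} (hMb : ∀ j, κ j ≤ Mb) {x : ℝ} (hx : 0 ≤ x) (j : ℕ) :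
    dg κ c t x j ≤ Real.exp (8 * Mb ^ 3 * |t|) / 2 * (c j ^ 2 / κ j) := by
  have hMbp : 0 < Mb := lt_of_lt_of_le (hκ 0) (hMb 0)
  unfold dg w
  have hA : (c j * Real.exp (4 * κ j ^ 3 * t - κ j * x)) ^ 2
      = c j ^ 2 * Real.exp (2 * (4 * κ j ^ 3 * t - κ j * x)) := by
    rw [mul_pow]
    congr 1
    rw [sq, ← Real.exp_add]
    congr 1
    ring
  have hexp : 2 * (4 * κ j ^ 3 * t - κ j * x) ≤ 8 * Mb ^ 3 * |t| := by
    have h1 : κ j ^ 3 * t ≤ Mb ^ 3 * |t| := by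
      rcases le_or_gt 0 t with ht | ht
      · rw [abs_of_nonneg ht]
        exact mul_le_mul_of_nonneg_right (pow_le_pow_left₀ (hκ j).le (hMb j) 3) ht
      · have h2 : κ j ^ 3 * t < 0 := mul_neg_of_pos_of_neg (pow_pos (hκ j) 3) ht
        have h3 : (0:ℝ) ≤ Mb ^ 3 * |t| := by positivity
        linarith
    have h2 : 0 ≤ κ j * x := mul_nonneg (hκ j).le hx
    nlinarith
  rw [hA]
  have hstep : c j ^ 2 * Real.exp (2 * (4 * κ j ^ 3 * t - κ j * x)) / (2 * κ j)
      ≤ c j ^ 2 * Real.exp (8 * Mb ^ 3 * |t|) / (2 * κ j) := by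
    gcongr
    linarith [hκ j]
  refine hstep.trans (le_of_eq ?_)
  field_simp

lemma dg_summable (hκ : ∀ j, 0 < κ j) (hc : ∀ j, 0 < c j) {Mb : ℝ} (hMb : ∀ j, κ j ≤ Mb)
    (hsum : Summable (fun j => (c j) ^ 2 / κ j)) {x : ℝ} (hx : 0 ≤ x) :
    Summable (fun j => dg κ c t x j) :=
  Summable.of_nonneg_of_le (fun j => (dg_pos κ c t hκ hc x j).le)
    (dg_le κ c t hκ hMb hx) (hsum.mul_left _)

lemma prod_dg_summable (hκ : ∀ j, 0 < κ j) (hc : ∀ j, 0 < c j) {Mb : ℝ} (hMb : ∀ j, κ j ≤ Mb)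
    (hsum : Summable (fun j => (c j) ^ 2 / κ j)) {x : ℝ} (hx : 0 ≤ x) :
    Summable (fun S : Finset ℕ => ∏ j ∈ S, dg κ c t x j) := by
  apply summable_of_sum_le (c := Real.exp (∑' j, dg κ c t x j))
  · intro S
    exact (Finset.prod_pos fun j _ => dg_pos κ c t hκ hc x j).le
  · intro u
    set T := u.sup id with hT
    have hsub : u ⊆ T.powerset := fun S hS => Finset.mem_powerset.mpr (Finset.le_sup (f := id) hS)
    calc ∑ S ∈ u, ∏ j ∈ S, dg κ c t x j
        ≤ ∑ S ∈ T.powerset, ∏ j ∈ S, dg κ c t x j :=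
          Finset.sum_le_sum_of_subset_of_nonneg hsub
            (fun S _ _ => (Finset.prod_pos fun j _ => dg_pos κ c t hκ hc x j).le)
      _ = ∏ j ∈ T, (dg κ c t x j + 1) := by
          rw [Finset.prod_add]
          exact (Finset.sum_congr rfl fun S _ => by simp).symm
      _ ≤ ∏ j ∈ T, Real.exp (dg κ c t x j) :=
          Finset.prod_le_prod (fun j _ => by linarith [dg_pos κ c t hκ hc x j])
            (fun j _ => by linarith [Real.add_one_le_exp (dg κ c t x j)])
      _ = Real.exp (∑ j ∈ T, dg κ c t x j) := (Real.exp_sum _ _).symm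
      _ ≤ Real.exp (∑' j, dg κ c t x j) := by
          apply Real.exp_le_exp.mpr
          exact Summable.sum_le_tsum T (fun j _ => (dg_pos κ c t hκ hc x j).le)
            (dg_summable κ c t hκ hc hMb hsum hx)

lemma minor_summable (hκ : ∀ j, 0 < κ j) (hc : ∀ j, 0 < c j) {Mb : ℝ} (hMb : ∀ j, κ j ≤ Mb)
    (hsum : Summable (fun j => (c j) ^ 2 / κ j)) {x : ℝ} (hx : 0 ≤ x) :
    Summable (fun S => minor κ c t x S) :=
  Summable.of_nonneg_of_le (fun S => minor_nonneg κ c t hκ x S)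
    (fun S => minor_le_prod κ c t hκ hc x S) (prod_dg_summable κ c t hκ hc hMb hsum hx)

lemma g0_summable (hκ : ∀ j, 0 < κ j) (hc : ∀ j, 0 < c j) {Mb : ℝ} (hMb : ∀ j, κ j ≤ Mb)
    (hsum : Summable (fun j => (c j) ^ 2 / κ j)) {x : ℝ} (hx : 0 ≤ x) :
    Summable (fun S => aS κ c t S * Real.exp (-bS κ S * x)) :=
  (minor_summable κ c t hκ hc hMb hsum hx).congr (fun S => minor_scale κ c t x S)

/-! ### The finite tau functions as partial sums -/

lemma submatrix_minor (N : ℕ) (x : ℝ) (s : Finset (Fin N)) :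
    Matrix.det ((Matrix.of fun j l : Fin N => solitonEntry κ c t x j l).submatrix
        (Subtype.val : {i // i ∈ s} → Fin N) Subtype.val)
      = minor κ c t x (s.map Fin.valEmbedding) := by
  let f : {i // i ∈ s} → {n // n ∈ s.map Fin.valEmbedding} :=
    fun i => ⟨(i.1 : ℕ), Finset.mem_map_of_mem _ i.2⟩
  have hbij : Function.Bijective f := by
    constructor
    · intro a b hab
      exact Subtype.ext (Fin.val_injective (congrArg Subtype.val hab))
    · rintro ⟨n, hn⟩
      rcases Finset.mem_map.mp hn with ⟨a, ha, hav⟩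
      exact ⟨⟨a, ha⟩, Subtype.ext (by simpa using hav)⟩
  let e := Equiv.ofBijective f hbij
  unfold minor
  rw [← Matrix.det_submatrix_equiv_self e
    (Matrix.of fun i j : {n // n ∈ s.map Fin.valEmbedding} => ment κ c t x i.1 j.1)]
  congr 1
  ext i j
  simp only [Matrix.submatrix_apply, Matrix.of_apply]
  exact entry_eq κ c t x i.1 j.1

lemma image_map_univ (N : ℕ) :
    Finset.image (fun s : Finset (Fin N) => s.map Fin.valEmbedding) Finset.univ
      = (Finset.range N).powerset := by
  ext S
  simp only [Finset.mem_image, Finset.mem_univ, true_and, Finset.mem_powerset]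
  constructor
  · rintro ⟨s, rfl⟩
    intro k hk
    rcases Finset.mem_map.mp hk with ⟨a, _, rfl⟩
    exact Finset.mem_range.mpr a.isLt
  · intro hsub
    have hlt : ∀ k ∈ S, k < N := fun k hk => Finset.mem_range.mp (hsub hk)
    refine ⟨S.attachFin hlt, ?_⟩
    ext k
    simp only [Finset.mem_map, Finset.mem_attachFin, Fin.valEmbedding_apply]
    constructor
    · rintro ⟨a, ha, rfl⟩; exact ha
    · intro hk; exact ⟨⟨k, hlt k hk⟩, hk, rfl⟩

lemma tauN_eq (N : ℕ) (x : ℝ) :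
    tauN κ c N t x = ∑ S ∈ (Finset.range N).powerset, minor κ c t x S := by
  classical
  unfold tauN
  rw [det_one_add_eq_sum_minors]
  calc ∑ s : Finset (Fin N), Matrix.det
        ((Matrix.of fun j l : Fin N => solitonEntry κ c t x j l).submatrix
          (Subtype.val : {i // i ∈ s} → Fin N) Subtype.val)
      = ∑ s : Finset (Fin N), minor κ c t x (s.map Fin.valEmbedding) :=
        Finset.sum_congr rfl fun s _ => submatrix_minor κ c t N x s
    _ = ∑ S ∈ Finset.image (fun s : Finset (Fin N) => s.map Fin.valEmbedding) Finset.univ,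
          minor κ c t x S :=
        (Finset.sum_image (fun a _ b _ h => Finset.map_injective _ h)).symm
    _ = ∑ S ∈ (Finset.range N).powerset, minor κ c t x S := by rw [image_map_univ]

lemma tendsto_tauN (hκ : ∀ j, 0 < κ j) (hc : ∀ j, 0 < c j) {Mb : ℝ} (hMb : ∀ j, κ j ≤ Mb)
    (hsum : Summable (fun j => (c j) ^ 2 / κ j)) {x : ℝ} (hx : 0 ≤ x) :
    Tendsto (fun N => tauN κ c N t x) atTop (nhds (∑' S, minor κ c t x S)) := by
  have hs := (minor_summable κ c t hκ hc hMb hsum hx).hasSum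
  have hp : Tendsto (fun N => (Finset.range N).powerset) atTop atTop := by
    apply tendsto_atTop_finset_of_monotone
    · intro a b hab
      exact Finset.powerset_mono.mpr (Finset.range_subset_range.mpr hab)
    · intro S
      refine ⟨S.sup id + 1, Finset.mem_powerset.mpr fun k hk => Finset.mem_range.mpr ?_⟩
      exact Nat.lt_succ_of_le (Finset.le_sup (f := id) hk)
  exact (hs.comp hp).congr fun N => (tauN_eq κ c t N x).symm

lemma tauInf_eq (hκ : ∀ j, 0 < κ j) (hc : ∀ j, 0 < c j) {Mb : ℝ} (hMb : ∀ j, κ j ≤ Mb)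
    (hsum : Summable (fun j => (c j) ^ 2 / κ j)) {x : ℝ} (hx : 0 ≤ x) :
    tauInf κ c t x = ∑' S, aS κ c t S * Real.exp (-bS κ S * x) :=
  ((tendsto_tauN κ c t hκ hc hMb hsum hx).limUnder_eq).trans
    (tsum_congr (fun S => minor_scale κ c t x S))


/-! ### Calculus of the limiting tau function -/

def F (x : ℝ) : ℝ := ∑' S, aS κ c t S * Real.exp (-bS κ S * x)
def F1 (x : ℝ) : ℝ := ∑' S, -bS κ S * (aS κ c t S * Real.exp (-bS κ S * x))
def F2 (x : ℝ) : ℝ := ∑' S, bS κ S ^ 2 * (aS κ c t S * Real.exp (-bS κ S * x))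

def ub (S : Finset ℕ) : ℝ := ∏ j ∈ S, dg κ c t (1/2) j

lemma aux_le_exp {u : ℝ} (hu : 0 ≤ u) : u ≤ Real.exp (u / 2) := by
  have h2 : Real.exp (u/2) = Real.exp (u/4) * Real.exp (u/4) := by
    rw [← Real.exp_add]; congr 1; ring
  have h := Real.add_one_le_exp (u/4)
  rw [h2]
  nlinarith [h, hu, sq_nonneg (u/4 - 1)]

lemma ub_summable (hκ : ∀ j, 0 < κ j) (hc : ∀ j, 0 < c j) {Mb : ℝ} (hMb : ∀ j, κ j ≤ Mb)
    (hsum : Summable (fun j => (c j) ^ 2 / κ j)) : Summable (ub κ c t) :=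
  prod_dg_summable κ c t hκ hc hMb hsum (by norm_num)

lemma half_bound (hκ : ∀ j, 0 < κ j) (hc : ∀ j, 0 < c j) (S : Finset ℕ) :
    aS κ c t S * Real.exp (-bS κ S * (1/2)) ≤ ub κ c t S := by
  rw [← minor_scale]
  exact minor_le_prod κ c t hκ hc (1/2) S

lemma bound0 (hκ : ∀ j, 0 < κ j) (hc : ∀ j, 0 < c j) (S : Finset ℕ) {y : ℝ} (hy : 1 ≤ y) :
    ‖aS κ c t S * Real.exp (-bS κ S * y)‖ ≤ ub κ c t S := by
  have ha := aS_nonneg κ c t hκ S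
  have hb := bS_nonneg κ hκ S
  rw [Real.norm_eq_abs, abs_of_nonneg (by positivity)]
  refine le_trans ?_ (half_bound κ c t hκ hc S)
  exact mul_le_mul_of_nonneg_left (Real.exp_le_exp.mpr
    (by nlinarith [mul_nonneg hb (by linarith : (0:ℝ) ≤ y - 1/2)])) ha

lemma exp_key1 (hκ : ∀ j, 0 < κ j) (S : Finset ℕ) {y : ℝ} (hy : 1 ≤ y) :
    bS κ S * Real.exp (-bS κ S * y) ≤ Real.exp (-bS κ S * (1/2)) := by
  have hb := bS_nonneg κ hκ S
  have h1 : bS κ S ≤ Real.exp (bS κ S / 2) := aux_le_exp hb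
  calc bS κ S * Real.exp (-bS κ S * y)
      ≤ bS κ S * Real.exp (-bS κ S * 1) :=
        mul_le_mul_of_nonneg_left (Real.exp_le_exp.mpr
          (by nlinarith [mul_nonneg hb (by linarith : (0:ℝ) ≤ y - 1)])) hb
    _ ≤ Real.exp (bS κ S / 2) * Real.exp (-bS κ S * 1) :=
        mul_le_mul_of_nonneg_right h1 (Real.exp_pos _).le
    _ = Real.exp (-bS κ S * (1/2)) := by rw [← Real.exp_add]; congr 1; ring

lemma exp_key2 (hκ : ∀ j, 0 < κ j) (S : Finset ℕ) {y : ℝ} (hy : 1 ≤ y) :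
    bS κ S ^ 2 * Real.exp (-bS κ S * y) ≤ 4 * Real.exp (-bS κ S * (1/2)) := by
  have hb := bS_nonneg κ hκ S
  have h1 : bS κ S / 2 ≤ Real.exp (bS κ S / 4) := by
    have := aux_le_exp (by linarith : (0:ℝ) ≤ bS κ S / 2)
    calc bS κ S / 2 ≤ Real.exp (bS κ S / 2 / 2) := this
      _ = Real.exp (bS κ S / 4) := by congr 1; ring
  have hsq : Real.exp (bS κ S / 4) * Real.exp (bS κ S / 4) = Real.exp (bS κ S / 2) := by
    rw [← Real.exp_add]; congr 1; ring
  have h2 : bS κ S ^ 2 ≤ 4 * Real.exp (bS κ S / 2) := by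
    nlinarith [h1, hsq, hb, Real.exp_pos (bS κ S / 4)]
  calc bS κ S ^ 2 * Real.exp (-bS κ S * y)
      ≤ bS κ S ^ 2 * Real.exp (-bS κ S * 1) :=
        mul_le_mul_of_nonneg_left (Real.exp_le_exp.mpr
          (by nlinarith [mul_nonneg hb (by linarith : (0:ℝ) ≤ y - 1)])) (by positivity)
    _ ≤ (4 * Real.exp (bS κ S / 2)) * Real.exp (-bS κ S * 1) :=
        mul_le_mul_of_nonneg_right h2 (Real.exp_pos _).le
    _ = 4 * Real.exp (-bS κ S * (1/2)) := by
        rw [mul_assoc, ← Real.exp_add]; congr 2; ring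

lemma bound1 (hκ : ∀ j, 0 < κ j) (hc : ∀ j, 0 < c j) (S : Finset ℕ) {y : ℝ} (hy : 1 ≤ y) :
    ‖-bS κ S * (aS κ c t S * Real.exp (-bS κ S * y))‖ ≤ ub κ c t S := by
  have ha := aS_nonneg κ c t hκ S
  have hb := bS_nonneg κ hκ S
  have hnorm : ‖-bS κ S * (aS κ c t S * Real.exp (-bS κ S * y))‖
      = bS κ S * (aS κ c t S * Real.exp (-bS κ S * y)) := by
    rw [Real.norm_eq_abs, abs_mul, abs_neg, abs_of_nonneg hb, abs_of_nonneg (by positivity)]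
  rw [hnorm]
  calc bS κ S * (aS κ c t S * Real.exp (-bS κ S * y))
      = aS κ c t S * (bS κ S * Real.exp (-bS κ S * y)) := by ring
    _ ≤ aS κ c t S * Real.exp (-bS κ S * (1/2)) :=
        mul_le_mul_of_nonneg_left (exp_key1 κ hκ S hy) ha
    _ ≤ ub κ c t S := half_bound κ c t hκ hc S

lemma bound2 (hκ : ∀ j, 0 < κ j) (hc : ∀ j, 0 < c j) (S : Finset ℕ) {y : ℝ} (hy : 1 ≤ y) :
    ‖bS κ S ^ 2 * (aS κ c t S * Real.exp (-bS κ S * y))‖ ≤ 4 * ub κ c t S := by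
  have ha := aS_nonneg κ c t hκ S
  have hb := bS_nonneg κ hκ S
  have hnorm : ‖bS κ S ^ 2 * (aS κ c t S * Real.exp (-bS κ S * y))‖
      = bS κ S ^ 2 * (aS κ c t S * Real.exp (-bS κ S * y)) := by
    rw [Real.norm_eq_abs, abs_of_nonneg (by positivity)]
  rw [hnorm]
  calc bS κ S ^ 2 * (aS κ c t S * Real.exp (-bS κ S * y))
      = aS κ c t S * (bS κ S ^ 2 * Real.exp (-bS κ S * y)) := by ring
    _ ≤ aS κ c t S * (4 * Real.exp (-bS κ S * (1/2))) :=
        mul_le_mul_of_nonneg_left (exp_key2 κ hκ S hy) ha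
    _ = 4 * (aS κ c t S * Real.exp (-bS κ S * (1/2))) := by ring
    _ ≤ 4 * ub κ c t S :=
        mul_le_mul_of_nonneg_left (half_bound κ c t hκ hc S) (by norm_num)

lemma hasDeriv_g0 (S : Finset ℕ) (y : ℝ) :
    HasDerivAt (fun z => aS κ c t S * Real.exp (-bS κ S * z))
      (-bS κ S * (aS κ c t S * Real.exp (-bS κ S * y))) y := by
  have h := (((hasDerivAt_id y).const_mul (-bS κ S)).exp.const_mul (aS κ c t S))
  simp only [id] at h
  refine h.congr_deriv ?_
  ring

lemma hasDeriv_g1 (S : Finset ℕ) (y : ℝ) :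
    HasDerivAt (fun z => -bS κ S * (aS κ c t S * Real.exp (-bS κ S * z)))
      (bS κ S ^ 2 * (aS κ c t S * Real.exp (-bS κ S * y))) y := by
  have h := (hasDeriv_g0 κ c t S y).const_mul (-bS κ S)
  refine h.congr_deriv ?_
  ring

lemma hasDerivAt_F (hκ : ∀ j, 0 < κ j) (hc : ∀ j, 0 < c j) {Mb : ℝ} (hMb : ∀ j, κ j ≤ Mb)
    (hsum : Summable (fun j => (c j) ^ 2 / κ j)) {y : ℝ} (hy : y ∈ Set.Ioi (1:ℝ)) :
    HasDerivAt (F κ c t) (F1 κ c t y) y := by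
  exact hasDerivAt_tsum_of_isPreconnected (ub_summable κ c t hκ hc hMb hsum)
    isOpen_Ioi isPreconnected_Ioi
    (fun S z _ => hasDeriv_g0 κ c t S z)
    (fun S z hz => bound1 κ c t hκ hc S (le_of_lt hz))
    (Set.mem_Ioi.mpr (by norm_num : (1:ℝ) < 2))
    (g0_summable κ c t hκ hc hMb hsum (by norm_num : (0:ℝ) ≤ 2)) hy

lemma hasDerivAt_F1 (hκ : ∀ j, 0 < κ j) (hc : ∀ j, 0 < c j) {Mb : ℝ} (hMb : ∀ j, κ j ≤ Mb)
    (hsum : Summable (fun j => (c j) ^ 2 / κ j)) {y : ℝ} (hy : y ∈ Set.Ioi (1:ℝ)) :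
    HasDerivAt (F1 κ c t) (F2 κ c t y) y := by
  exact hasDerivAt_tsum_of_isPreconnected ((ub_summable κ c t hκ hc hMb hsum).mul_left 4)
    isOpen_Ioi isPreconnected_Ioi
    (fun S z _ => hasDeriv_g1 κ c t S z)
    (fun S z hz => bound2 κ c t hκ hc S (le_of_lt hz))
    (Set.mem_Ioi.mpr (by norm_num : (1:ℝ) < 2))
    (Summable.of_norm_bounded (ub_summable κ c t hκ hc hMb hsum)
      (fun S => bound1 κ c t hκ hc S (by norm_num : (1:ℝ) ≤ 2))) hy

lemma F_ge_one (hκ : ∀ j, 0 < κ j) (hc : ∀ j, 0 < c j) {Mb : ℝ} (hMb : ∀ j, κ j ≤ Mb)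
    (hsum : Summable (fun j => (c j) ^ 2 / κ j)) {y : ℝ} (hy : 0 ≤ y) :
    1 ≤ F κ c t y := by
  have h := Summable.le_tsum (g0_summable κ c t hκ hc hMb hsum hy) ∅
    (fun S _ => mul_nonneg (aS_nonneg κ c t hκ S) (Real.exp_pos _).le)
  calc (1:ℝ) = aS κ c t ∅ * Real.exp (-bS κ ∅ * y) := by
        rw [aS_empty, bS_empty]; simp
    _ ≤ F κ c t y := h

lemma F_lim (hκ : ∀ j, 0 < κ j) (hc : ∀ j, 0 < c j) {Mb : ℝ} (hMb : ∀ j, κ j ≤ Mb)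
    (hsum : Summable (fun j => (c j) ^ 2 / κ j)) :
    Tendsto (F κ c t) atTop (nhds 1) := by
  have h := tendsto_tsum_of_dominated_convergence (𝓕 := atTop)
    (f := fun (x : ℝ) (S : Finset ℕ) => aS κ c t S * Real.exp (-bS κ S * x))
    (g := fun S => if S = ∅ then (1:ℝ) else 0)
    (bound := ub κ c t) (ub_summable κ c t hκ hc hMb hsum) ?_ ?_
  · have h1 : ∑' S : Finset ℕ, (if S = ∅ then (1:ℝ) else 0) = 1 := tsum_ite_eq ∅ 1
    rw [h1] at h
    exact h
  · intro S
    show Tendsto (fun x => aS κ c t S * Real.exp (-bS κ S * x)) atTop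
      (nhds (if S = ∅ then (1:ℝ) else 0))
    by_cases hS : S = ∅
    · subst hS
      rw [if_pos rfl]
      exact Tendsto.congr (fun x => by simp [aS_empty, bS_empty]) tendsto_const_nhds
    · rw [if_neg hS]
      have hb := bS_pos κ hκ (Finset.nonempty_iff_ne_empty.mpr hS)
      have hexp : Tendsto (fun x:ℝ => Real.exp (-bS κ S * x)) atTop (nhds 0) :=
        Real.tendsto_exp_atBot.comp (tendsto_id.const_mul_atTop_of_neg (neg_lt_zero.mpr hb))
      simpa using hexp.const_mul (aS κ c t S)
  · filter_upwards [eventually_ge_atTop (1:ℝ)] with x hx S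
    exact bound0 κ c t hκ hc S hx

lemma F1_lim (hκ : ∀ j, 0 < κ j) (hc : ∀ j, 0 < c j) {Mb : ℝ} (hMb : ∀ j, κ j ≤ Mb)
    (hsum : Summable (fun j => (c j) ^ 2 / κ j)) :
    Tendsto (F1 κ c t) atTop (nhds 0) := by
  have h := tendsto_tsum_of_dominated_convergence (𝓕 := atTop)
    (f := fun (x : ℝ) (S : Finset ℕ) => -bS κ S * (aS κ c t S * Real.exp (-bS κ S * x)))
    (g := fun _ => (0:ℝ))
    (bound := ub κ c t) (ub_summable κ c t hκ hc hMb hsum) ?_ ?_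
  · rw [tsum_zero] at h
    exact h
  · intro S
    by_cases hS : S = ∅
    · subst hS
      exact Tendsto.congr (fun x => by simp [bS_empty]) tendsto_const_nhds
    · have hb := bS_pos κ hκ (Finset.nonempty_iff_ne_empty.mpr hS)
      have hexp : Tendsto (fun x:ℝ => Real.exp (-bS κ S * x)) atTop (nhds 0) :=
        Real.tendsto_exp_atBot.comp (tendsto_id.const_mul_atTop_of_neg (neg_lt_zero.mpr hb))
      simpa using ((hexp.const_mul (aS κ c t S)).const_mul (-bS κ S))
  · filter_upwards [eventually_ge_atTop (1:ℝ)] with x hx S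
    exact bound1 κ c t hκ hc S hx

lemma F2_lim (hκ : ∀ j, 0 < κ j) (hc : ∀ j, 0 < c j) {Mb : ℝ} (hMb : ∀ j, κ j ≤ Mb)
    (hsum : Summable (fun j => (c j) ^ 2 / κ j)) :
    Tendsto (F2 κ c t) atTop (nhds 0) := by
  have h := tendsto_tsum_of_dominated_convergence (𝓕 := atTop)
    (f := fun (x : ℝ) (S : Finset ℕ) => bS κ S ^ 2 * (aS κ c t S * Real.exp (-bS κ S * x)))
    (g := fun _ => (0:ℝ))
    (bound := fun S => 4 * ub κ c t S)
    ((ub_summable κ c t hκ hc hMb hsum).mul_left 4) ?_ ?_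
  · rw [tsum_zero] at h
    exact h
  · intro S
    by_cases hS : S = ∅
    · subst hS
      exact Tendsto.congr (fun x => by simp [bS_empty]) tendsto_const_nhds
    · have hb := bS_pos κ hκ (Finset.nonempty_iff_ne_empty.mpr hS)
      have hexp : Tendsto (fun x:ℝ => Real.exp (-bS κ S * x)) atTop (nhds 0) :=
        Real.tendsto_exp_atBot.comp (tendsto_id.const_mul_atTop_of_neg (neg_lt_zero.mpr hb))
      simpa using ((hexp.const_mul (aS κ c t S)).const_mul (bS κ S ^ 2))
  · filter_upwards [eventually_ge_atTop (1:ℝ)] with x hx S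
    exact bound2 κ c t hκ hc S hx

lemma Vinf_eq (hκ : ∀ j, 0 < κ j) (hc : ∀ j, 0 < c j) {Mb : ℝ} (hMb : ∀ j, κ j ≤ Mb)
    (hsum : Summable (fun j => (c j) ^ 2 / κ j)) {x : ℝ} (hx : 1 < x) :
    Vinf κ c t x = -2 * ((F2 κ c t x * F κ c t x - F1 κ c t x * F1 κ c t x) / F κ c t x ^ 2) := by
  have hU : Set.Ioi (1:ℝ) ∈ nhds x := isOpen_Ioi.mem_nhds hx
  have hFpos : ∀ y ∈ Set.Ioi (1:ℝ), 0 < F κ c t y := fun y hy =>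
    lt_of_lt_of_le one_pos (F_ge_one κ c t hκ hc hMb hsum (le_of_lt (lt_trans zero_lt_one hy)))
  have hlogeq : (fun y => Real.log (tauInf κ c t y)) =ᶠ[nhds x] (fun y => Real.log (F κ c t y)) := by
    filter_upwards [hU] with y hy
    rw [tauInf_eq κ c t hκ hc hMb hsum (le_of_lt (lt_trans zero_lt_one hy))]
    rfl
  have hd1 : ∀ y ∈ Set.Ioi (1:ℝ),
      HasDerivAt (fun z => Real.log (F κ c t z)) (F1 κ c t y / F κ c t y) y :=
    fun y hy => (hasDerivAt_F κ c t hκ hc hMb hsum hy).log (hFpos y hy).ne'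
  have hderiveq : deriv (fun y => Real.log (tauInf κ c t y)) =ᶠ[nhds x]
      (fun y => F1 κ c t y / F κ c t y) := by
    refine hlogeq.deriv.trans ?_
    filter_upwards [hU] with y hy
    exact (hd1 y hy).deriv
  have hq : HasDerivAt (fun y => F1 κ c t y / F κ c t y)
      ((F2 κ c t x * F κ c t x - F1 κ c t x * F1 κ c t x) / F κ c t x ^ 2) x :=
    (hasDerivAt_F1 κ c t hκ hc hMb hsum (Set.mem_Ioi.mpr hx)).div
      (hasDerivAt_F κ c t hκ hc hMb hsum (Set.mem_Ioi.mpr hx)) (hFpos x (Set.mem_Ioi.mpr hx)).ne'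
  unfold Vinf
  rw [show (2:ℕ) = 0+1+1 from rfl, iteratedDeriv_succ, iteratedDeriv_succ, iteratedDeriv_zero]
  rw [hderiveq.deriv_eq, hq.deriv]

end Stmt13

/-- For each fixed `t`, `V_∞(t,x) → 0` as `x → +∞`. -/
theorem statement13 (κ c : ℕ → ℝ) (hκ : ∀ j, 0 < κ j)
    (hbd : ∃ M, ∀ j, κ j ≤ M) (hinj : Function.Injective κ) (hc : ∀ j, 0 < c j)
    (hsum : Summable (fun j => (c j) ^ 2 / κ j)) (t : ℝ) :
    Filter.Tendsto (fun x => Vinf κ c t x) Filter.atTop (nhds 0) := by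
  obtain ⟨Mb, hMb⟩ := hbd
  have hFlim := Stmt13.F_lim κ c t hκ hc hMb hsum
  have hF1lim := Stmt13.F1_lim κ c t hκ hc hMb hsum
  have hF2lim := Stmt13.F2_lim κ c t hκ hc hMb hsum
  have hnum : Filter.Tendsto (fun x => Stmt13.F2 κ c t x * Stmt13.F κ c t x -
      Stmt13.F1 κ c t x * Stmt13.F1 κ c t x) Filter.atTop (nhds (0*1 - 0*0)) :=
    (hF2lim.mul hFlim).sub (hF1lim.mul hF1lim)
  have hden : Filter.Tendsto (fun x => Stmt13.F κ c t x ^ 2) Filter.atTop (nhds (1^2)) :=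
    hFlim.pow 2
  have hdiv := hnum.div hden (by norm_num)
  have hfull := hdiv.const_mul (-2 : ℝ)
  have h0 : (-2 : ℝ) * ((0*1 - 0*0) / 1^2) = 0 := by norm_num
  rw [h0] at hfull
  refine hfull.congr' ?_
  filter_upwards [Filter.eventually_gt_atTop (1:ℝ)] with x hx
  exact (Stmt13.Vinf_eq κ c t hκ hc hMb hsum hx).symm

end
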